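/- Let β > 0, f(x) = βx²/2 on ℝ, and let X : (0,∞) → ℝ be a twice continuously differentiable solution of Ẍ(t) + (3/t)Ẋ(t) + βX(t) = 0. Let 0 < t₁ < t₂ with t₂ − t₁ > √(40/β), and set J[Y] = ∫_{t₁}^{t₂} t³( (1/2)Ẏ(t)² − βY(t)²/2 ) dt. Then X is a saddle point of J in the following sense: for every δ > 0 there exist continuously differentiable functions h₊, h₋ : [t₁,t₂] → ℝ with h₊(t₁) = h₊(t₂) = h₋(t₁) = h₋(t₂) = 0, with max_{t∈[t₁,t₂]} |h₊(t)| + max_{t∈[t₁,t₂]} |ḣ₊(t)| < δ and likewise for h₋, such that J[X + h₊] > J[X] and J[X + h₋] < J[X]. -/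

import Mathlib

open Set

/-- The action functional with vanishing damping `3/t` on `[t₁, t₂]` for the scalar quadratic
loss `f(x) = βx²/2`, evaluated on a curve `Y` with derivative `Y'`. -/
noncomputable def nesterovAction1D (β t₁ t₂ : ℝ) (Y Y' : ℝ → ℝ) : ℝ :=
  ∫ t in t₁..t₂, t ^ 3 * ((1 / 2) * (Y' t) ^ 2 - β * (Y t) ^ 2 / 2)

private lemma contInt {f : ℝ → ℝ} {a b : ℝ} (hab : a ≤ b) (hf : ContinuousOn f (Icc a b)) :
    IntervalIntegrable f MeasureTheory.volume a b :=
  (by rw [uIcc_of_le hab]; exact hf : ContinuousOn f (uIcc a b)).intervalIntegrable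

private lemma quad_neg (β a s : ℝ) (ha : 0 < a) (hs : 0 < s) (h40 : 40 < β*s^2) :
    (7/60*s^6 + 2/5*a*s^5 + 1/2*a^2*s^4 + 1/3*a^3*s^3)
      - β*(1/168*s^8 + 1/35*a*s^7 + 1/20*a^2*s^6 + 1/30*a^3*s^5) < 0 := by
  have hB : (0:ℝ) < 1/168*s^8 + 1/35*a*s^7 + 1/20*a^2*s^6 + 1/30*a^3*s^5 := by positivity
  have hE : (0:ℝ) ≤ 17/140*s^8 + 26/35*a*s^7 + 3/2*a^2*s^6 + a^3*s^5 := by positivity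
  have h1 : (0:ℝ) < (β*s^2 - 40) * (1/168*s^8 + 1/35*a*s^7 + 1/20*a^2*s^6 + 1/30*a^3*s^5) :=
    mul_pos (by linarith) hB
  nlinarith [mul_pos hs hs, sq_nonneg s]

private lemma polyQ (β a b c : ℝ) (hβ : 0 < β) (ha : 0 < a) (hab : a < b) (hc : 0 < c)
    (h40 : 40 < β*(b-a)^2) :
    (∫ t in a..b, t^3*((1/2)*(c*(a+b-2*t))^2 - β*(c*((t-a)*(b-t)))^2/2)) < 0 := by
  set F : ℝ → ℝ := fun t => c^2/2*(((a+b)^2*t^4/4 - 4*(a+b)/5*t^5 + 2/3*t^6)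
    - β*(a^2*b^2*t^4/4 - 2/5*a*b*(a+b)*t^5 + ((a+b)^2+2*a*b)/6*t^6 - 2*(a+b)/7*t^7 + t^8/8))
    with hF
  have hder : ∀ t : ℝ, HasDerivAt F (t^3*((1/2)*(c*(a+b-2*t))^2 - β*(c*((t-a)*(b-t)))^2/2)) t := by
    intro t
    have h4 := hasDerivAt_pow 4 t
    have h5 := hasDerivAt_pow 5 t
    have h6 := hasDerivAt_pow 6 t
    have h7 := hasDerivAt_pow 7 t
    have h8 := hasDerivAt_pow 8 t
    have hd : HasDerivAt (fun t : ℝ =>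
        ((a+b)^2/4 - β*a^2*b^2/4) * t^4
        + (-(4*(a+b)/5) + β*(2/5*a*b*(a+b))) * t^5
        + (2/3 - β*((a+b)^2+2*a*b)/6) * t^6
        + (β*(2*(a+b)/7)) * t^7
        + (-(β/8)) * t^8)
        (((a+b)^2/4 - β*a^2*b^2/4) * (4 * t^3)
        + (-(4*(a+b)/5) + β*(2/5*a*b*(a+b))) * (5 * t^4)
        + (2/3 - β*((a+b)^2+2*a*b)/6) * (6 * t^5)
        + (β*(2*(a+b)/7)) * (7 * t^6)
        + (-(β/8)) * (8 * t^7)) t := by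
      have := ((((h4.const_mul ((a+b)^2/4 - β*a^2*b^2/4)).add
          (h5.const_mul (-(4*(a+b)/5) + β*(2/5*a*b*(a+b))))).add
          (h6.const_mul (2/3 - β*((a+b)^2+2*a*b)/6))).add
          (h7.const_mul (β*(2*(a+b)/7)))).add
          (h8.const_mul (-(β/8)))
      convert this using 1
      · rfl
      · rfl
      · rfl
      all_goals (push_cast; ring)
    have := hd.const_mul (c^2/2)
    convert this using 1
    · rfl
    · rfl
    · rw [hF]; funext t; ring
    · ring
  have hcont : Continuous fun t : ℝ => t^3*((1/2)*(c*(a+b-2*t))^2 - β*(c*((t-a)*(b-t)))^2/2) := by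
    fun_prop
  rw [intervalIntegral.integral_eq_sub_of_hasDerivAt (fun t _ => hder t)
    (hcont.intervalIntegrable a b)]
  have key : F b - F a = c^2/2*((7/60*(b-a)^6 + 2/5*a*(b-a)^5 + 1/2*a^2*(b-a)^4 + 1/3*a^3*(b-a)^3)
      - β*(1/168*(b-a)^8 + 1/35*a*(b-a)^7 + 1/20*a^2*(b-a)^6 + 1/30*a^3*(b-a)^5)) := by
    rw [hF]; ring
  rw [key]
  have := quad_neg β a (b-a) ha (by linarith) h40
  nlinarith [sq_nonneg c, mul_pos hc hc]

private lemma sinQ (β a b c k : ℝ) (n : ℕ) (hβ : 0 < β) (ha : 0 < a) (hab : a < b) (hc : 0 < c)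
    (hkpos : 0 < k) (hkn : k*(b-a) = n*Real.pi) (hk2 : β*b^3 < k^2*a^3) :
    0 < ∫ t in a..b, t^3*((1/2)*(c*(k*Real.cos (k*(t-a))))^2 - β*(c*Real.sin (k*(t-a)))^2/2) := by
  set A₁ : ℝ := 1/2*c^2*k^2*a^3 with hA₁
  set A₂ : ℝ := β/2*c^2*b^3 with hA₂
  -- the comparison function
  have hcomp : ∀ t ∈ Icc a b,
      (A₁+A₂)*(Real.cos (k*(t-a)))^2 - A₂ ≤
        t^3*((1/2)*(c*(k*Real.cos (k*(t-a))))^2 - β*(c*Real.sin (k*(t-a)))^2/2) := by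
    intro t htm
    obtain ⟨h1, h2⟩ := htm
    have ha3 : a^3 ≤ t^3 := pow_le_pow_left₀ ha.le h1 3
    have hb3 : t^3 ≤ b^3 := pow_le_pow_left₀ (by linarith) h2 3
    have hpy := Real.sin_sq_add_cos_sq (k*(t-a))
    have e : t^3*((1/2)*(c*(k*Real.cos (k*(t-a))))^2 - β*(c*Real.sin (k*(t-a)))^2/2)
        - ((A₁+A₂)*(Real.cos (k*(t-a)))^2 - A₂)
        = 1/2*c^2*k^2*(Real.cos (k*(t-a)))^2*(t^3-a^3)
          + β/2*c^2*(Real.sin (k*(t-a)))^2*(b^3-t^3) := by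
      rw [hA₁, hA₂]; linear_combination (-(β/2*c^2*b^3)) * hpy
    have hn1 : (0:ℝ) ≤ 1/2*c^2*k^2*(Real.cos (k*(t-a)))^2*(t^3-a^3) :=
      mul_nonneg (by positivity) (sub_nonneg.mpr ha3)
    have hn2 : (0:ℝ) ≤ β/2*c^2*(Real.sin (k*(t-a)))^2*(b^3-t^3) :=
      mul_nonneg (by positivity) (sub_nonneg.mpr hb3)
    linarith
  -- antiderivative of the comparison function
  have hder : ∀ t : ℝ, HasDerivAt
      (fun t => -A₂*t + (A₁+A₂)*(t/2 + Real.sin (k*(t-a))*Real.cos (k*(t-a))/(2*k)))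
      ((A₁+A₂)*(Real.cos (k*(t-a)))^2 - A₂) t := by
    intro t
    have hu : HasDerivAt (fun t : ℝ => k*(t-a)) (k*1) t :=
      ((hasDerivAt_id t).sub_const a).const_mul k
    have hsin : HasDerivAt (fun t : ℝ => Real.sin (k*(t-a)))
        (Real.cos (k*(t-a)) * (k*1)) t := (Real.hasDerivAt_sin _).comp t hu
    have hcos : HasDerivAt (fun t : ℝ => Real.cos (k*(t-a)))
        (-Real.sin (k*(t-a)) * (k*1)) t := (Real.hasDerivAt_cos _).comp t hu
    have hsc := hsin.mul hcos
    have hid : HasDerivAt (fun t : ℝ => t) 1 t := hasDerivAt_id t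
    have := ((hid.const_mul (-A₂)).add
      (((hid.div_const 2).add (hsc.div_const (2*k))).const_mul (A₁+A₂)))
    convert this using 1
    · rfl
    · rfl
    · rfl
    have hpy := Real.sin_sq_add_cos_sq (k*(t-a))
    have hk0 : k ≠ 0 := ne_of_gt hkpos
    rw [hA₁, hA₂]
    field_simp
    linear_combination (β*b^3+k^2*a^3) * hpy
  have hcont1 : Continuous fun t : ℝ => (A₁+A₂)*(Real.cos (k*(t-a)))^2 - A₂ := by fun_prop
  have hcont2 : Continuous fun t : ℝ =>
      t^3*((1/2)*(c*(k*Real.cos (k*(t-a))))^2 - β*(c*Real.sin (k*(t-a)))^2/2) := by fun_prop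
  have hmono := intervalIntegral.integral_mono_on (μ := MeasureTheory.volume) (le_of_lt hab)
    (hcont1.intervalIntegrable a b) (hcont2.intervalIntegrable a b) hcomp
  have hval : (∫ t in a..b, ((A₁+A₂)*(Real.cos (k*(t-a)))^2 - A₂))
      = (b-a)/2*(A₁ - A₂) := by
    rw [intervalIntegral.integral_eq_sub_of_hasDerivAt (fun t _ => hder t)
      (hcont1.intervalIntegrable a b)]
    have h0 : k*(a-a) = 0 := by ring
    have hnb : Real.sin (k*(b-a)) = 0 := by rw [hkn]; exact Real.sin_nat_mul_pi n
    rw [h0]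
    simp [hnb]
    ring
  have hpos : 0 < (b-a)/2*(A₁ - A₂) := by
    apply mul_pos (by linarith)
    rw [hA₁, hA₂]
    nlinarith [mul_pos hc hc]
  calc (0:ℝ) < (b-a)/2*(A₁ - A₂) := hpos
    _ = _ := hval.symm
    _ ≤ _ := hmono

private lemma action_expand (β : ℝ) (X X' X'' : ℝ → ℝ)
    (hX : ∀ t ∈ Ioi (0 : ℝ), HasDerivAt X (X' t) t)
    (hX' : ∀ t ∈ Ioi (0 : ℝ), HasDerivAt X' (X'' t) t)
    (hODE : ∀ t ∈ Ioi (0 : ℝ), X'' t + (3 / t) * X' t + β * X t = 0)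
    (t₁ t₂ : ℝ) (ht₁ : 0 < t₁) (ht : t₁ < t₂)
    (h h' : ℝ → ℝ)
    (hh : ∀ t ∈ Icc t₁ t₂, HasDerivWithinAt h (h' t) (Icc t₁ t₂) t)
    (hh' : ContinuousOn h' (Icc t₁ t₂)) (hza : h t₁ = 0) (hzb : h t₂ = 0) :
    nesterovAction1D β t₁ t₂ (X + h) (X' + h') =
      nesterovAction1D β t₁ t₂ X X' + ∫ t in t₁..t₂, t^3*((1/2)*(h' t)^2 - β*(h t)^2/2) := by
  have hsub : Icc t₁ t₂ ⊆ Ioi (0:ℝ) := fun t htm => lt_of_lt_of_le ht₁ htm.1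
  have cX : ContinuousOn X (Icc t₁ t₂) :=
    fun t htm => (hX t (hsub htm)).continuousAt.continuousWithinAt
  have cX' : ContinuousOn X' (Icc t₁ t₂) :=
    fun t htm => (hX' t (hsub htm)).continuousAt.continuousWithinAt
  have ch : ContinuousOn h (Icc t₁ t₂) := fun t htm => (hh t htm).continuousWithinAt
  have ct3 : ContinuousOn (fun t : ℝ => t^3) (Icc t₁ t₂) := (continuousOn_id.pow 3)
  have cf₀ : ContinuousOn (fun t => t^3*((1/2)*(X' t)^2 - β*(X t)^2/2)) (Icc t₁ t₂) :=
    ct3.mul ((continuousOn_const.mul (cX'.pow 2)).sub ((continuousOn_const.mul (cX.pow 2)).div_const 2))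
  have cf₁ : ContinuousOn (fun t => t^3*(X' t*h' t - β*(X t*h t))) (Icc t₁ t₂) :=
    ct3.mul ((cX'.mul hh').sub (continuousOn_const.mul (cX.mul ch)))
  have cf₂ : ContinuousOn (fun t => t^3*((1/2)*(h' t)^2 - β*(h t)^2/2)) (Icc t₁ t₂) :=
    ct3.mul ((continuousOn_const.mul (hh'.pow 2)).sub ((continuousOn_const.mul (ch.pow 2)).div_const 2))
  have i₀ := contInt ht.le cf₀
  have i₁ := contInt ht.le cf₁
  have i₂ := contInt ht.le cf₂
  have e1 : nesterovAction1D β t₁ t₂ (X + h) (X' + h')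
      = ∫ t in t₁..t₂, ((fun t => t^3*((1/2)*(X' t)^2 - β*(X t)^2/2)) t
        + ((fun t => t^3*(X' t*h' t - β*(X t*h t))) t
          + (fun t => t^3*((1/2)*(h' t)^2 - β*(h t)^2/2)) t)) := by
    rw [nesterovAction1D]
    apply intervalIntegral.integral_congr
    intro t _
    simp only [Pi.add_apply]
    ring
  rw [e1, intervalIntegral.integral_add i₀ (i₁.add i₂), intervalIntegral.integral_add i₁ i₂]
  have e2 : (∫ t in t₁..t₂, (fun t => t^3*(X' t*h' t - β*(X t*h t))) t) = 0 := by
    have hG : ContinuousOn (fun t => t^3 * X' t * h t) (Icc t₁ t₂) := (ct3.mul cX').mul ch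
    have hder : ∀ x ∈ Ioo t₁ t₂, HasDerivWithinAt (fun t => t^3 * X' t * h t)
        ((fun t => t^3*(X' t*h' t - β*(X t*h t))) x) (Ioi x) x := by
      intro x hx
      have hx0 : (0:ℝ) < x := lt_trans ht₁ hx.1
      have hxI : x ∈ Icc t₁ t₂ := ⟨hx.1.le, hx.2.le⟩
      have hhx : HasDerivAt h (h' x) x :=
        (hh x hxI).hasDerivAt (Icc_mem_nhds hx.1 hx.2)
      have ht3 : HasDerivAt (fun t : ℝ => t^3) (3*x^2) x := by
        simpa using hasDerivAt_pow 3 x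
      have hprod := ((ht3.mul (hX' x hx0)).mul hhx)
      have hx0' : x ≠ 0 := ne_of_gt hx0
      have hode2 : x * X'' x + 3 * X' x + β * x * X x = 0 := by
        have hode := hODE x hx0
        field_simp at hode
        linear_combination hode
      apply HasDerivAt.hasDerivWithinAt
      convert hprod using 1
      · rfl
      · rfl
      simp only [Pi.mul_apply]
      linear_combination (-(x^2 * h x)) * hode2
    rw [intervalIntegral.integral_eq_sub_of_hasDeriv_right_of_le ht.le hG hder i₁]
    simp [hza, hzb]
  rw [e2, nesterovAction1D]
  ring

/-- **Nesterov's path with vanishing damping is a saddle point of the action** when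
`t₂ - t₁ > √(40/β)`: arbitrarily small (in `C¹` norm) admissible perturbations can both
increase and decrease the action. -/
theorem nesterov_vanishing_damping_saddle
    (β : ℝ) (hβ : 0 < β) (X X' X'' : ℝ → ℝ)
    (hX : ∀ t ∈ Ioi (0 : ℝ), HasDerivAt X (X' t) t)
    (hX' : ∀ t ∈ Ioi (0 : ℝ), HasDerivAt X' (X'' t) t)
    (hX'' : ContinuousOn X'' (Ioi (0 : ℝ)))
    (hODE : ∀ t ∈ Ioi (0 : ℝ), X'' t + (3 / t) * X' t + β * X t = 0)
    (t₁ t₂ : ℝ) (ht₁ : 0 < t₁) (ht : t₁ < t₂)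
    (hgap : t₂ - t₁ > Real.sqrt (40 / β)) :
    ∀ δ > (0 : ℝ), ∃ hp hp' hm hm' : ℝ → ℝ,
      (∀ t ∈ Icc t₁ t₂, HasDerivWithinAt hp (hp' t) (Icc t₁ t₂) t) ∧
      ContinuousOn hp' (Icc t₁ t₂) ∧ hp t₁ = 0 ∧ hp t₂ = 0 ∧
      (∀ t ∈ Icc t₁ t₂, HasDerivWithinAt hm (hm' t) (Icc t₁ t₂) t) ∧
      ContinuousOn hm' (Icc t₁ t₂) ∧ hm t₁ = 0 ∧ hm t₂ = 0 ∧
      (⨆ t ∈ Icc t₁ t₂, |hp t|) + (⨆ t ∈ Icc t₁ t₂, |hp' t|) < δ ∧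
      (⨆ t ∈ Icc t₁ t₂, |hm t|) + (⨆ t ∈ Icc t₁ t₂, |hm' t|) < δ ∧
      nesterovAction1D β t₁ t₂ (X + hp) (X' + hp') > nesterovAction1D β t₁ t₂ X X' ∧
      nesterovAction1D β t₁ t₂ (X + hm) (X' + hm') < nesterovAction1D β t₁ t₂ X X' := by

  intro δ hδ
  have hL : 0 < t₂ - t₁ := by linarith
  have ht₂pos : (0:ℝ) < t₂ := lt_trans ht₁ ht
  have h40 : 40 < β * (t₂ - t₁) ^ 2 := by
    have hs0 : (0:ℝ) ≤ 40 / β := by positivity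
    have h1 : Real.sqrt (40/β) ^ 2 < (t₂ - t₁) ^ 2 :=
      pow_lt_pow_left₀ hgap (Real.sqrt_nonneg _) (by norm_num)
    rw [Real.sq_sqrt hs0] at h1
    have h2 : β * (40/β) < β * (t₂-t₁)^2 := mul_lt_mul_of_pos_left h1 hβ
    rwa [mul_div_cancel₀ _ (ne_of_gt hβ)] at h2
  -- choose the frequency
  obtain ⟨n, hn⟩ := exists_nat_gt ((t₂ - t₁)/Real.pi * Real.sqrt (β*t₂^3/t₁^3))
  set k : ℝ := n*Real.pi/(t₂ - t₁) with hkdef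
  have hnpos : (0:ℝ) < n := lt_of_le_of_lt (by positivity) hn
  have hkpos : 0 < k := by
    rw [hkdef]; positivity
  have hkn : k * (t₂ - t₁) = n * Real.pi := by
    rw [hkdef]; field_simp
  have hk2 : β*t₂^3 < k^2*t₁^3 := by
    have hπ : (0:ℝ) < Real.pi := Real.pi_pos
    have h1 : Real.sqrt (β*t₂^3/t₁^3) < k := by
      rw [hkdef, lt_div_iff₀ hL]
      have := mul_lt_mul_of_pos_right hn hπ
      calc Real.sqrt (β*t₂^3/t₁^3) * (t₂ - t₁)
          = ((t₂-t₁)/Real.pi * Real.sqrt (β*t₂^3/t₁^3)) * Real.pi := by field_simp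
        _ < n * Real.pi := this
    have h2 : β*t₂^3/t₁^3 < k^2 := by
      have := pow_lt_pow_left₀ h1 (Real.sqrt_nonneg _) (by norm_num : 2 ≠ 0)
      rwa [Real.sq_sqrt (by positivity)] at this
    calc β*t₂^3 = β*t₂^3/t₁^3 * t₁^3 := by field_simp
      _ < k^2 * t₁^3 := by
          apply mul_lt_mul_of_pos_right h2 (by positivity)
  -- the increasing perturbation
  set cp : ℝ := δ/(2*(1+k)) with hcpdef
  have hcp : 0 < cp := by rw [hcpdef]; positivity
  set hp : ℝ → ℝ := fun t => cp * Real.sin (k*(t - t₁)) with hhp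
  set hp' : ℝ → ℝ := fun t => cp * (k * Real.cos (k*(t - t₁))) with hhp'
  have hpder : ∀ t : ℝ, HasDerivAt hp (hp' t) t := by
    intro t
    have hu : HasDerivAt (fun t : ℝ => k*(t - t₁)) (k*1) t :=
      ((hasDerivAt_id t).sub_const t₁).const_mul k
    have := ((Real.hasDerivAt_sin (k*(t - t₁))).comp t hu).const_mul cp
    rw [hhp, hhp']
    convert this using 1
    · rfl
    · rfl
    · rfl
    beta_reduce
    ring
  have hpa : hp t₁ = 0 := by rw [hhp]; simp
  have hpb : hp t₂ = 0 := by
    rw [hhp]; simp only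
    rw [hkn, Real.sin_nat_mul_pi, mul_zero]
  -- the decreasing perturbation
  set cm : ℝ := δ/(2*(1+(t₂-t₁))^2) with hcmdef
  have hcm : 0 < cm := by rw [hcmdef]; positivity
  set hm : ℝ → ℝ := fun t => cm * ((t - t₁)*(t₂ - t)) with hhm
  set hm' : ℝ → ℝ := fun t => cm * (t₁ + t₂ - 2*t) with hhm'
  have hmder : ∀ t : ℝ, HasDerivAt hm (hm' t) t := by
    intro t
    have := (((hasDerivAt_id t).sub_const t₁).mul
      ((hasDerivAt_const t t₂).sub (hasDerivAt_id t))).const_mul cm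
    rw [hhm, hhm']
    convert this using 1
    · rfl
    · rfl
    · rfl
    simp only [id_eq, Pi.sub_apply]
    ring
  have hma : hm t₁ = 0 := by rw [hhm]; simp
  have hmb : hm t₂ = 0 := by rw [hhm]; simp
  -- continuity
  have hpc' : ContinuousOn hp' (Icc t₁ t₂) := by
    rw [hhp']; fun_prop
  have hmc' : ContinuousOn hm' (Icc t₁ t₂) := by
    rw [hhm']; fun_prop
  refine ⟨hp, hp', hm, hm', fun t _ => (hpder t).hasDerivWithinAt, hpc', hpa, hpb,
    fun t _ => (hmder t).hasDerivWithinAt, hmc', hma, hmb, ?_, ?_, ?_, ?_⟩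
  · -- C¹ bound for hp
    have b1 : (⨆ t ∈ Icc t₁ t₂, |hp t|) ≤ cp := by
      refine Real.iSup_le (fun t => Real.iSup_le (fun _ => ?_) hcp.le) hcp.le
      rw [hhp]; simp only
      rw [abs_mul, abs_of_pos hcp]
      calc cp * |Real.sin (k*(t-t₁))| ≤ cp * 1 :=
            mul_le_mul_of_nonneg_left (Real.abs_sin_le_one _) hcp.le
        _ = cp := mul_one cp
    have b2 : (⨆ t ∈ Icc t₁ t₂, |hp' t|) ≤ cp * k := by
      refine Real.iSup_le (fun t => Real.iSup_le (fun _ => ?_) (by positivity))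
        (by positivity)
      rw [hhp']; simp only
      rw [abs_mul, abs_of_pos hcp, abs_mul, abs_of_pos hkpos]
      calc cp * (k * |Real.cos (k*(t-t₁))|) ≤ cp * (k * 1) := by
            apply mul_le_mul_of_nonneg_left _ hcp.le
            exact mul_le_mul_of_nonneg_left (Real.abs_cos_le_one _) hkpos.le
        _ = cp * k := by ring
    have : cp + cp * k = δ/2 := by
      rw [hcpdef]; field_simp
    linarith
  · -- C¹ bound for hm
    have b1 : (⨆ t ∈ Icc t₁ t₂, |hm t|) ≤ cm * (t₂-t₁)^2 := by
      refine Real.iSup_le (fun t => Real.iSup_le (fun htm => ?_) (by positivity))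
        (by positivity)
      rw [hhm]; simp only
      rw [abs_mul, abs_of_pos hcm]
      apply mul_le_mul_of_nonneg_left _ hcm.le
      obtain ⟨h1, h2⟩ := htm
      rw [abs_of_nonneg (mul_nonneg (by linarith) (by linarith))]
      nlinarith
    have b2 : (⨆ t ∈ Icc t₁ t₂, |hm' t|) ≤ cm * (t₂-t₁) := by
      refine Real.iSup_le (fun t => Real.iSup_le (fun htm => ?_) (by positivity))
        (by positivity)
      rw [hhm']; simp only
      rw [abs_mul, abs_of_pos hcm]
      apply mul_le_mul_of_nonneg_left _ hcm.le
      obtain ⟨h1, h2⟩ := htm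
      rw [abs_le]
      constructor <;> linarith
    have key : cm * (t₂-t₁)^2 + cm * (t₂-t₁) < δ := by
      rw [hcmdef]
      rw [div_mul_eq_mul_div, div_mul_eq_mul_div, ← add_div, div_lt_iff₀ (by positivity)]
      nlinarith
    linarith
  · -- action increases
    rw [action_expand β X X' X'' hX hX' hODE t₁ t₂ ht₁ ht hp hp'
      (fun t _ => (hpder t).hasDerivWithinAt) hpc' hpa hpb]
    have hQ := sinQ β t₁ t₂ cp k n hβ ht₁ ht hcp hkpos hkn hk2
    have : (∫ t in t₁..t₂, t^3*((1/2)*(hp' t)^2 - β*(hp t)^2/2))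
        = ∫ t in t₁..t₂, t^3*((1/2)*(cp*(k*Real.cos (k*(t-t₁))))^2 - β*(cp*Real.sin (k*(t-t₁)))^2/2) := by
      rfl
    rw [this]
    linarith
  · -- action decreases
    rw [action_expand β X X' X'' hX hX' hODE t₁ t₂ ht₁ ht hm hm'
      (fun t _ => (hmder t).hasDerivWithinAt) hmc' hma hmb]
    have hQ := polyQ β t₁ t₂ cm hβ ht₁ ht hcm h40
    have : (∫ t in t₁..t₂, t^3*((1/2)*(hm' t)^2 - β*(hm t)^2/2))
        = ∫ t in t₁..t₂, t^3*((1/2)*(cm*(t₁+t₂-2*t))^2 - β*(cm*((t-t₁)*(t₂-t)))^2/2) := by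
      rfl
    rw [this]
    linarith
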